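/- Let {P1(s_t)} and {P2(s_t)} be the marginal state distributions of two time-inhomogeneous Markov processes on a measurable state space S with the same initial distribution P1(s_0) = P2(s_0). Suppose that for every t, the expected one-step transition discrepancy satisfies E_{s∼P1(s_t)}[ D_TV(P1(s'|s), P2(s'|s)) ] ≤ δ, where P_i(s'|s) is the transition kernel of process i at step t. Then for every t ≥ 0, D_TV(P1(s_t), P2(s_t)) ≤ t·δ. -/

import Mathlib

open MeasureTheory ProbabilityTheory
open scoped ENNReal

/-- Total variation distance between two measures:
`D_TV(μ, ν) = sup_{A measurable} |μ(A) − ν(A)|`. -/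
noncomputable def tvDist {S : Type*} [MeasurableSpace S] (μ ν : Measure S) : ℝ :=
  ⨆ A : {A : Set S // MeasurableSet A}, |(μ A.1).toReal - (ν A.1).toReal|

/-- The marginal state distribution at time `t` of a time-inhomogeneous Markov process
with initial distribution `μ0` and transition kernels `κ 0, κ 1, …`. -/
noncomputable def marginal {S : Type*} [MeasurableSpace S]
    (μ0 : Measure S) (κ : ℕ → Kernel S S) : ℕ → Measure S
  | 0 => μ0
  | t + 1 => (marginal μ0 κ t).bind (fun s => κ t s)

section Aux

variable {S : Type*} [MeasurableSpace S]

lemma toReal_prob_le_one (μ : Measure S) [IsProbabilityMeasure μ] (A : Set S) :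
    (μ A).toReal ≤ 1 := by
  have h := prob_le_one (μ := μ) (s := A)
  have := ENNReal.toReal_mono (by simp) h
  simpa using this

lemma tvDist_bddAbove (μ ν : Measure S) [IsProbabilityMeasure μ] [IsProbabilityMeasure ν] :
    BddAbove (Set.range fun A : {A : Set S // MeasurableSet A} =>
      |(μ A.1).toReal - (ν A.1).toReal|) := by
  refine ⟨1, fun x hx => ?_⟩
  obtain ⟨A, rfl⟩ := hx
  rw [abs_sub_le_iff]
  constructor
  · have h1 := toReal_prob_le_one μ A.1
    have h2 : (0:ℝ) ≤ (ν A.1).toReal := ENNReal.toReal_nonneg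
    linarith
  · have h1 := toReal_prob_le_one ν A.1
    have h2 : (0:ℝ) ≤ (μ A.1).toReal := ENNReal.toReal_nonneg
    linarith

lemma abs_le_tvDist (μ ν : Measure S) [IsProbabilityMeasure μ] [IsProbabilityMeasure ν]
    {A : Set S} (hA : MeasurableSet A) :
    |(μ A).toReal - (ν A).toReal| ≤ tvDist μ ν :=
  le_ciSup (tvDist_bddAbove μ ν) (⟨A, hA⟩ : {A : Set S // MeasurableSet A})

lemma tvDist_nonneg (μ ν : Measure S) [IsProbabilityMeasure μ] [IsProbabilityMeasure ν] :
    0 ≤ tvDist μ ν :=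
  le_trans (abs_nonneg _) (abs_le_tvDist μ ν MeasurableSet.empty)

lemma tvDist_le (μ ν : Measure S) {c : ℝ} (hc : 0 ≤ c)
    (h : ∀ A : Set S, MeasurableSet A → |(μ A).toReal - (ν A).toReal| ≤ c) :
    tvDist μ ν ≤ c :=
  Real.iSup_le (fun A => h A.1 A.2) hc

lemma tvDist_le_one (μ ν : Measure S) [IsProbabilityMeasure μ] [IsProbabilityMeasure ν] :
    tvDist μ ν ≤ 1 := by
  refine tvDist_le μ ν zero_le_one fun A hA => ?_
  rw [abs_sub_le_iff]
  constructor
  · have h1 := toReal_prob_le_one μ A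
    have h2 : (0:ℝ) ≤ (ν A).toReal := ENNReal.toReal_nonneg
    linarith
  · have h1 := toReal_prob_le_one ν A
    have h2 : (0:ℝ) ≤ (μ A).toReal := ENNReal.toReal_nonneg
    linarith

lemma isProbabilityMeasure_bind (μ : Measure S) [IsProbabilityMeasure μ]
    (κ : Kernel S S) [IsMarkovKernel κ] :
    IsProbabilityMeasure (μ.bind fun s => κ s) := by
  constructor
  rw [Measure.bind_apply MeasurableSet.univ (Kernel.measurable κ).aemeasurable]
  simp

lemma isProbabilityMeasure_marginal (μ0 : Measure S) [IsProbabilityMeasure μ0]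
    (κ : ℕ → Kernel S S) [∀ t, IsMarkovKernel (κ t)] (t : ℕ) :
    IsProbabilityMeasure (marginal μ0 κ t) := by
  induction t with
  | zero => simpa [marginal]
  | succ t ih =>
    rw [marginal]
    exact @isProbabilityMeasure_bind _ _ _ ih _ _

open Set in
/-- Key lemma: the difference of integrals of a `[0,1]`-valued function against two
probability measures is bounded by their total variation distance.  Proved via the
layer-cake formula. -/
lemma abs_lintegral_sub_le_tvDist (μ ν : Measure S)
    [IsProbabilityMeasure μ] [IsProbabilityMeasure ν]
    {f : S → ℝ≥0∞} (hf : Measurable f) (hf1 : ∀ s, f s ≤ 1) :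
    |(∫⁻ s, f s ∂μ).toReal - (∫⁻ s, f s ∂ν).toReal| ≤ tvDist μ ν := by
  set g : S → ℝ := fun s => (f s).toReal with hg
  have hg_meas : Measurable g := hf.ennreal_toReal
  have hg_nn : 0 ≤ g := fun s => ENNReal.toReal_nonneg
  have hofg : ∀ s, ENNReal.ofReal (g s) = f s := fun s =>
    ENNReal.ofReal_toReal (lt_of_le_of_lt (hf1 s) (by norm_num)).ne
  -- layer cake for an arbitrary probability measure
  have layer : ∀ (ρ : Measure S), IsProbabilityMeasure ρ →
      ∫⁻ s, f s ∂ρ = ∫⁻ t in Ioc (0:ℝ) 1, ρ {a | t < g a} := by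
    intro ρ hρ
    have h1 : ∫⁻ s, f s ∂ρ = ∫⁻ t in Ioi (0:ℝ), ρ {a | t < g a} := by
      rw [← lintegral_eq_lintegral_meas_lt ρ (Filter.Eventually.of_forall hg_nn)
        hg_meas.aemeasurable]
      exact lintegral_congr fun s => (hofg s).symm
    have hsplit : Ioc (0:ℝ) 1 ∪ Ioi (1:ℝ) = Ioi 0 := Ioc_union_Ioi_eq_Ioi zero_le_one
    have hdisj : Disjoint (Ioc (0:ℝ) 1) (Ioi 1) := Ioc_disjoint_Ioi le_rfl
    have h2 : ∫⁻ t in Ioi (0:ℝ), ρ {a | t < g a}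
        = (∫⁻ t in Ioc (0:ℝ) 1, ρ {a | t < g a}) + ∫⁻ t in Ioi (1:ℝ), ρ {a | t < g a} := by
      rw [← hsplit, lintegral_union measurableSet_Ioi hdisj]
    have h3 : ∫⁻ t in Ioi (1:ℝ), ρ {a | t < g a} = 0 := by
      have : ∫⁻ t in Ioi (1:ℝ), ρ {a | t < g a} = ∫⁻ _t in Ioi (1:ℝ), (0:ℝ≥0∞) := by
        apply setLIntegral_congr_fun measurableSet_Ioi
        intro t ht
        show ρ {a | t < g a} = 0
        have : {a | t < g a} = (∅ : Set S) := by
          ext a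
          simp only [mem_setOf_eq, mem_empty_iff_false, iff_false, not_lt]
          have : g a ≤ 1 := by
            have := hf1 a
            rw [hg]
            calc (f a).toReal ≤ (1:ℝ≥0∞).toReal := ENNReal.toReal_mono (by norm_num) this
            _ = 1 := by simp
          exact le_trans this (le_of_lt ht)
        rw [this]
        simp
      simp [this]
    rw [h1, h2, h3, add_zero]
  have hμ := layer μ inferInstance
  have hν := layer ν inferInstance
  -- measurability of the layer functions
  have hanti : ∀ (ρ : Measure S), Antitone (fun t : ℝ => ρ {a | t < g a}) := by
    intro ρ t t' htt'
    exact measure_mono fun a ha => lt_of_le_of_lt htt' ha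
  -- the pointwise bound between the two layer functions
  have hpt : ∀ ρ₁ ρ₂ : Measure S, IsProbabilityMeasure ρ₁ → IsProbabilityMeasure ρ₂ →
      ∀ t : ℝ, ρ₁ {a | t < g a} - ρ₂ {a | t < g a} ≤ ENNReal.ofReal (tvDist ρ₁ ρ₂) := by
    intro ρ₁ ρ₂ h₁ h₂ t
    have hAm : MeasurableSet {a | t < g a} := measurableSet_lt measurable_const hg_meas
    have habs := abs_le_tvDist ρ₁ ρ₂ hAm
    have hle : (ρ₁ {a | t < g a}).toReal - (ρ₂ {a | t < g a}).toReal ≤ tvDist ρ₁ ρ₂ :=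
      le_trans (le_abs_self _) habs
    rw [tsub_le_iff_right]
    have hfin1 : ρ₁ {a | t < g a} ≠ ⊤ := measure_ne_top _ _
    have hfin2 : ρ₂ {a | t < g a} ≠ ⊤ := measure_ne_top _ _
    calc ρ₁ {a | t < g a} = ENNReal.ofReal ((ρ₁ {a | t < g a}).toReal) :=
          (ENNReal.ofReal_toReal hfin1).symm
      _ ≤ ENNReal.ofReal (tvDist ρ₁ ρ₂ + (ρ₂ {a | t < g a}).toReal) := by
          apply ENNReal.ofReal_le_ofReal; linarith
      _ = ENNReal.ofReal (tvDist ρ₁ ρ₂) + ENNReal.ofReal ((ρ₂ {a | t < g a}).toReal) := by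
          rw [ENNReal.ofReal_add (tvDist_nonneg ρ₁ ρ₂) ENNReal.toReal_nonneg]
      _ = ENNReal.ofReal (tvDist ρ₁ ρ₂) + ρ₂ {a | t < g a} := by
          rw [ENNReal.ofReal_toReal hfin2]
  -- one-sided bound
  have onesided : ∀ ρ₁ ρ₂ : Measure S, IsProbabilityMeasure ρ₁ → IsProbabilityMeasure ρ₂ →
      (∫⁻ s, f s ∂ρ₁).toReal - (∫⁻ s, f s ∂ρ₂).toReal ≤ tvDist ρ₁ ρ₂ := by
    intro ρ₁ ρ₂ h₁ h₂
    have hρ₁ := layer ρ₁ h₁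
    have hρ₂ := layer ρ₂ h₂
    set a := ∫⁻ t in Ioc (0:ℝ) 1, ρ₁ {s | t < g s} with ha
    set b := ∫⁻ t in Ioc (0:ℝ) 1, ρ₂ {s | t < g s} with hb
    have hle1 : ∀ (ρ : Measure S), IsProbabilityMeasure ρ → ∫⁻ s, f s ∂ρ ≤ 1 := by
      intro ρ hρ
      calc ∫⁻ s, f s ∂ρ ≤ ∫⁻ _s, (1 : ℝ≥0∞) ∂ρ := lintegral_mono hf1
        _ = 1 := by simp
    have hafin : a ≠ ⊤ := by
      rw [← hρ₁]
      exact (lt_of_le_of_lt (hle1 ρ₁ h₁) ENNReal.one_lt_top).ne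
    have hbfin : b ≠ ⊤ := by
      rw [← hρ₂]
      exact (lt_of_le_of_lt (hle1 ρ₂ h₂) ENNReal.one_lt_top).ne
    have hsub : a - b ≤ ENNReal.ofReal (tvDist ρ₁ ρ₂) := by
      calc a - b ≤ ∫⁻ t in Ioc (0:ℝ) 1, (ρ₁ {s | t < g s} - ρ₂ {s | t < g s}) :=
            lintegral_sub_le _ _ (hanti ρ₂).measurable
        _ ≤ ∫⁻ _t in Ioc (0:ℝ) 1, ENNReal.ofReal (tvDist ρ₁ ρ₂) := by
            apply lintegral_mono
            intro t
            exact hpt ρ₁ ρ₂ h₁ h₂ t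
        _ = ENNReal.ofReal (tvDist ρ₁ ρ₂) := by
            rw [setLIntegral_const]
            simp [Real.volume_Ioc]
    rw [hρ₁, hρ₂]
    rcases le_total a b with hab | hab
    · have : a.toReal ≤ b.toReal := ENNReal.toReal_mono hbfin hab
      linarith [tvDist_nonneg ρ₁ ρ₂]
    · have heq : (a - b).toReal = a.toReal - b.toReal :=
        ENNReal.toReal_sub_of_le hab hafin
      have := ENNReal.toReal_mono (by simp) hsub
      rw [heq] at this
      calc a.toReal - b.toReal ≤ (ENNReal.ofReal (tvDist ρ₁ ρ₂)).toReal := this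
        _ = tvDist ρ₁ ρ₂ := ENNReal.toReal_ofReal (tvDist_nonneg ρ₁ ρ₂)
  have htvsymm : tvDist ν μ = tvDist μ ν := by
    unfold tvDist
    congr 1
    funext A
    rw [abs_sub_comm]
  rw [abs_sub_le_iff]
  exact ⟨onesided μ ν inferInstance inferInstance,
    htvsymm ▸ onesided ν μ inferInstance inferInstance⟩

/-- One induction step. -/
lemma tvDist_bind_le (μ ν : Measure S) [IsProbabilityMeasure μ] [IsProbabilityMeasure ν]
    (κ1 κ2 : Kernel S S) [IsMarkovKernel κ1] [IsMarkovKernel κ2]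
    (hmeas : Measurable fun s => tvDist (κ1 s) (κ2 s)) :
    tvDist (μ.bind fun s => κ1 s) (ν.bind fun s => κ2 s)
      ≤ tvDist μ ν + ∫ s, tvDist (κ1 s) (κ2 s) ∂μ := by
  have htv_nn : ∀ s, 0 ≤ tvDist (κ1 s) (κ2 s) := fun s => tvDist_nonneg _ _
  have htv_le1 : ∀ s, tvDist (κ1 s) (κ2 s) ≤ 1 := fun s => tvDist_le_one _ _
  have hint_nn : 0 ≤ ∫ s, tvDist (κ1 s) (κ2 s) ∂μ := integral_nonneg htv_nn
  refine tvDist_le _ _ (by linarith [tvDist_nonneg μ ν]) fun A hA => ?_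
  rw [Measure.bind_apply hA (Kernel.measurable κ1).aemeasurable, Measure.bind_apply hA (Kernel.measurable κ2).aemeasurable]
  have hmκ1 : Measurable fun s => κ1 s A := Kernel.measurable_coe κ1 hA
  have hmκ2 : Measurable fun s => κ2 s A := Kernel.measurable_coe κ2 hA
  have hb1 : ∀ s, κ1 s A ≤ 1 := fun s => prob_le_one
  have hb2 : ∀ s, κ2 s A ≤ 1 := fun s => prob_le_one
  have tri : |(∫⁻ s, κ1 s A ∂μ).toReal - (∫⁻ s, κ2 s A ∂ν).toReal|
      ≤ |(∫⁻ s, κ1 s A ∂μ).toReal - (∫⁻ s, κ2 s A ∂μ).toReal|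
        + |(∫⁻ s, κ2 s A ∂μ).toReal - (∫⁻ s, κ2 s A ∂ν).toReal| :=
    abs_sub_le _ _ _
  have h2 : |(∫⁻ s, κ2 s A ∂μ).toReal - (∫⁻ s, κ2 s A ∂ν).toReal| ≤ tvDist μ ν :=
    abs_lintegral_sub_le_tvDist μ ν hmκ2 hb2
  -- first term
  have hfin1 : ∀ᵐ s ∂μ, κ1 s A < ⊤ :=
    Filter.Eventually.of_forall fun s => measure_lt_top _ _
  have hfin2 : ∀ᵐ s ∂μ, κ2 s A < ⊤ :=
    Filter.Eventually.of_forall fun s => measure_lt_top _ _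
  have hi1 : (∫⁻ s, κ1 s A ∂μ).toReal = ∫ s, (κ1 s A).toReal ∂μ :=
    (integral_toReal hmκ1.aemeasurable hfin1).symm
  have hi2 : (∫⁻ s, κ2 s A ∂μ).toReal = ∫ s, (κ2 s A).toReal ∂μ :=
    (integral_toReal hmκ2.aemeasurable hfin2).symm
  have hint1 : Integrable (fun s => (κ1 s A).toReal) μ := by
    refine ⟨hmκ1.ennreal_toReal.aestronglyMeasurable, ?_⟩
    apply HasFiniteIntegral.of_bounded (C := 1)
    refine Filter.Eventually.of_forall fun s => ?_
    rw [Real.norm_eq_abs, abs_of_nonneg ENNReal.toReal_nonneg]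
    exact toReal_prob_le_one (κ1 s) A
  have hint2 : Integrable (fun s => (κ2 s A).toReal) μ := by
    refine ⟨hmκ2.ennreal_toReal.aestronglyMeasurable, ?_⟩
    apply HasFiniteIntegral.of_bounded (C := 1)
    refine Filter.Eventually.of_forall fun s => ?_
    rw [Real.norm_eq_abs, abs_of_nonneg ENNReal.toReal_nonneg]
    exact toReal_prob_le_one (κ2 s) A
  have hinttv : Integrable (fun s => tvDist (κ1 s) (κ2 s)) μ := by
    refine ⟨hmeas.aestronglyMeasurable, ?_⟩
    apply HasFiniteIntegral.of_bounded (C := 1)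
    refine Filter.Eventually.of_forall fun s => ?_
    rw [Real.norm_eq_abs, abs_of_nonneg (htv_nn s)]
    exact htv_le1 s
  have h1 : |(∫⁻ s, κ1 s A ∂μ).toReal - (∫⁻ s, κ2 s A ∂μ).toReal|
      ≤ ∫ s, tvDist (κ1 s) (κ2 s) ∂μ := by
    rw [hi1, hi2, ← integral_sub hint1 hint2]
    calc |∫ s, ((κ1 s A).toReal - (κ2 s A).toReal) ∂μ|
        ≤ ∫ s, |(κ1 s A).toReal - (κ2 s A).toReal| ∂μ := by
          simpa only [Real.norm_eq_abs] using
            norm_integral_le_integral_norm (fun s => (κ1 s A).toReal - (κ2 s A).toReal)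
      _ ≤ ∫ s, tvDist (κ1 s) (κ2 s) ∂μ := by
          apply integral_mono ((hint1.sub hint2).abs) hinttv
          intro s
          exact abs_le_tvDist (κ1 s) (κ2 s) hA
  linarith

end Aux

/-- TV bound for rollout state distributions.
Two time-inhomogeneous Markov processes with the same initial distribution, whose
expected one-step transition discrepancy (under the first process's marginals) is at most
`δ` at every step, have marginals at most `t·δ` apart in total variation at every time `t`. -/
theorem tv_marginal_le_time_mul_delta
    {S : Type*} [MeasurableSpace S]
    (μ0 : Measure S) [IsProbabilityMeasure μ0]
    (κ1 κ2 : ℕ → Kernel S S)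
    [∀ t, IsMarkovKernel (κ1 t)] [∀ t, IsMarkovKernel (κ2 t)]
    (δ : ℝ)
    (hmeas : ∀ t, Measurable fun s => tvDist (κ1 t s) (κ2 t s))
    (hδ : ∀ t, ∫ s, tvDist (κ1 t s) (κ2 t s) ∂(marginal μ0 κ1 t) ≤ δ) :
    ∀ t : ℕ, tvDist (marginal μ0 κ1 t) (marginal μ0 κ2 t) ≤ t * δ := by
  intro t
  induction t with
  | zero =>
    simp only [Nat.cast_zero, zero_mul, marginal]
    refine tvDist_le _ _ le_rfl fun A hA => ?_
    simp
  | succ t ih =>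
    haveI h1 := isProbabilityMeasure_marginal μ0 κ1 t
    haveI h2 := isProbabilityMeasure_marginal μ0 κ2 t
    have hstep := tvDist_bind_le (marginal μ0 κ1 t) (marginal μ0 κ2 t)
      (κ1 t) (κ2 t) (hmeas t)
    have hδt := hδ t
    have : tvDist (marginal μ0 κ1 (t+1)) (marginal μ0 κ2 (t+1))
        ≤ (t : ℝ) * δ + δ := by
      calc tvDist (marginal μ0 κ1 (t+1)) (marginal μ0 κ2 (t+1))
          ≤ tvDist (marginal μ0 κ1 t) (marginal μ0 κ2 t)
            + ∫ s, tvDist (κ1 t s) (κ2 t s) ∂(marginal μ0 κ1 t) := hstep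
        _ ≤ (t : ℝ) * δ + δ := add_le_add ih hδt
    calc tvDist (marginal μ0 κ1 (t+1)) (marginal μ0 κ2 (t+1)) ≤ (t : ℝ) * δ + δ := this
      _ = ((t : ℕ) + 1 : ℝ) * δ := by ring
      _ = ((t + 1 : ℕ) : ℝ) * δ := by push_cast; ring
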